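/- Every simple graph G admits a partition of its vertex set into ω(G) δ-sets, hence φ(G) ≤ ω(G). -/

import Mathlib

open Finset

/-- A δ-set in a graph: every vertex in the set has degree at most `n - |S|`. -/
def IsDeltaSet {V : Type*} [Fintype V] (G : SimpleGraph V) [DecidableRel G.Adj]
    (S : Finset V) : Prop :=
  ∀ v ∈ S, G.degree v ≤ Fintype.card V - S.card

/-- The generalized chromatic number: the least `r` such that the vertex set
partitions into `r` δ-sets. -/
noncomputable def genChrom {V : Type*} [Fintype V] [DecidableEq V]
    (G : SimpleGraph V) [DecidableRel G.Adj] : ℕ :=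
  sInf {r | ∃ f : V → Fin r, ∀ i, IsDeltaSet G (Finset.univ.filter fun v => f v = i)}

/-- Quadratic mean of the degree sequence. -/
noncomputable def qmDeg {V : Type*} [Fintype V] (G : SimpleGraph V) [DecidableRel G.Adj] : ℝ :=
  Real.sqrt ((∑ v, (G.degree v : ℝ) ^ 2) / Fintype.card V)

/-- `k`-th elementary symmetric polynomial of `x : Fin r → ℝ`. -/
def esym {r : ℕ} (k : ℕ) (x : Fin r → ℝ) : ℝ :=
  ∑ t ∈ Finset.univ.powersetCard k, ∏ i ∈ t, x i

lemma key {V : Type*} [Fintype V] [DecidableEq V] (G : SimpleGraph V) [DecidableRel G.Adj] :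
    ∀ m (R : Finset V), R.card ≤ m → ∃ (k : ℕ) (f : V → ℕ) (C : Finset V),
      (∀ v ∈ R, f v < k) ∧
      (∀ i, ∀ v ∈ R.filter (fun v => f v = i),
        G.degree v ≤ Fintype.card V - (R.filter (fun v => f v = i)).card) ∧
      G.IsClique C ∧ C.card = k ∧ C ⊆ R := by
  intro m
  induction m with
  | zero =>
    intro R hR
    have : R = ∅ := Finset.card_eq_zero.mp (Nat.le_zero.mp hR)
    subst this
    exact ⟨0, fun _ => 0, ∅, by simp, by simp, by simp [SimpleGraph.isClique_empty], by simp, by simp⟩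
  | succ m ih =>
    intro R hR
    rcases R.eq_empty_or_nonempty with rfl | hne
    · exact ⟨0, fun _ => 0, ∅, by simp, by simp, by simp [SimpleGraph.isClique_empty], by simp, by simp⟩
    obtain ⟨h, hhR, hmax⟩ := Finset.exists_max_image R (fun v => G.degree v) hne
    set R' := R.filter (fun v => G.Adj h v) with hR'def
    have hsub : R' ⊆ R := Finset.filter_subset _ _
    have hhnot : h ∉ R' := by simp [hR'def]
    have hR'card : R'.card ≤ m := by
      have h1 : R'.card < R.card := Finset.card_lt_card ⟨hsub, fun hc => hhnot (hc hhR)⟩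
      omega
    obtain ⟨k, f, C, hf, hdelta, hCl, hCc, hCR⟩ := ih R' hR'card
    refine ⟨k + 1, fun v => if G.Adj h v then f v else k, insert h C, ?_, ?_, ?_, ?_, ?_⟩
    · intro v hv
      by_cases hadj : G.Adj h v
      · simp only [if_pos hadj]
        exact Nat.lt_succ_of_lt (hf v (Finset.mem_filter.mpr ⟨hv, hadj⟩))
      · simp only [if_neg hadj]
        omega
    · intro i
      by_cases hik : i = k
      · have hBeq : R.filter (fun v => (if G.Adj h v then f v else k) = i)
            = R.filter (fun v => ¬ G.Adj h v) := by
          ext v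
          simp only [Finset.mem_filter]
          constructor
          · rintro ⟨hvR, hv⟩
            refine ⟨hvR, fun hadj => ?_⟩
            rw [if_pos hadj] at hv
            rw [hik] at hv
            exact absurd hv (Nat.ne_of_lt (hf v (Finset.mem_filter.mpr ⟨hvR, hadj⟩)))
          · rintro ⟨hvR, hv⟩
            exact ⟨hvR, by rw [if_neg hv, hik]⟩
        rw [hBeq]
        intro v hv
        obtain ⟨hvR, -⟩ := Finset.mem_filter.mp hv
        have hdv : G.degree v ≤ G.degree h := hmax v hvR
        have hBsub : R.filter (fun v => ¬ G.Adj h v) ⊆ Finset.univ.filter (fun v => ¬ G.Adj h v) :=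
          Finset.filter_subset_filter _ (Finset.subset_univ R)
        have hcard : (Finset.univ.filter (fun v => ¬ G.Adj h v)).card
            = Fintype.card V - G.degree h := by
          rw [Finset.filter_not, Finset.card_sdiff_of_subset (Finset.filter_subset _ _)]
          rw [Finset.card_univ]
          congr 1
          rw [← SimpleGraph.card_neighborFinset_eq_degree]
          congr 1
          ext w
          simp [SimpleGraph.mem_neighborFinset]
        have h1 : (R.filter (fun v => ¬ G.Adj h v)).card ≤ Fintype.card V - G.degree h := by
          rw [← hcard]; exact Finset.card_le_card hBsub
        have h2 : G.degree h ≤ Fintype.card V := by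
          rw [← SimpleGraph.card_neighborFinset_eq_degree]
          exact Finset.card_le_univ _
        omega
      · have hEq : R.filter (fun v => (if G.Adj h v then f v else k) = i)
            = R'.filter (fun v => f v = i) := by
          ext v
          constructor
          · intro hv
            obtain ⟨hvR, hv⟩ := Finset.mem_filter.mp hv
            by_cases hadj : G.Adj h v
            · rw [if_pos hadj] at hv
              exact Finset.mem_filter.mpr ⟨Finset.mem_filter.mpr ⟨hvR, hadj⟩, hv⟩
            · rw [if_neg hadj] at hv
              exact absurd hv.symm hik
          · intro hv
            obtain ⟨hvR', hv⟩ := Finset.mem_filter.mp hv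
            obtain ⟨hvR, hadj⟩ := Finset.mem_filter.mp hvR'
            exact Finset.mem_filter.mpr ⟨hvR, by rw [if_pos hadj]; exact hv⟩
        rw [hEq]
        exact hdelta i
    · rw [Finset.coe_insert]
      refine hCl.insert fun c hc _ => ?_
      have := hCR hc
      rw [hR'def] at this
      exact (Finset.mem_filter.mp this).2
    · rw [Finset.card_insert_of_notMem fun hc => G.loopless.irrefl h ((Finset.mem_filter.mp (hCR hc)).2), hCc]
    · exact Finset.insert_subset hhR (hCR.trans hsub)

theorem stmt16 {V : Type*} [Fintype V] [DecidableEq V] (G : SimpleGraph V) [DecidableRel G.Adj] :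
    (∃ f : V → Fin G.cliqueNum,
      ∀ i, IsDeltaSet G (Finset.univ.filter fun v => f v = i)) ∧
    genChrom G ≤ G.cliqueNum := by
  obtain ⟨k, f, C, hf, hdelta, hCl, hCc, -⟩ :=
    key G (Fintype.card V) Finset.univ Finset.card_univ.le
  have hk : k ≤ G.cliqueNum := hCc ▸ hCl.card_le_cliqueNum
  have main : ∃ f : V → Fin G.cliqueNum,
      ∀ i, IsDeltaSet G (Finset.univ.filter fun v => f v = i) := by
    refine ⟨fun v => ⟨f v, lt_of_lt_of_le (hf v (Finset.mem_univ v)) hk⟩, fun i => ?_⟩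
    have hEq : (Finset.univ.filter fun v =>
        (⟨f v, lt_of_lt_of_le (hf v (Finset.mem_univ v)) hk⟩ : Fin G.cliqueNum) = i)
        = Finset.univ.filter (fun v => f v = (i : ℕ)) := by
      ext v
      simp only [Finset.mem_filter, Finset.mem_univ, true_and, Fin.ext_iff]
    intro v hv
    rw [hEq] at hv ⊢
    exact hdelta (i : ℕ) v hv
  exact ⟨main, Nat.sInf_le main⟩
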